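/- Let F be a field, n ≥ 1, and A ∈ M_n(F) a matrix whose characteristic polynomial is irreducible over F. Then the commutant of A equals F[A] = {f(A) : f ∈ F[X], deg f ≤ n−1}; in particular the commutant of A is a field. -/

import Mathlib

open scoped Matrix

set_option maxHeartbeats 2000000 in
/-- If the characteristic polynomial of `A ∈ M_n(F)` is irreducible,
then the commutant of `A` equals `F[A] = {f(A) : deg f ≤ n - 1}`, and every
nonzero member of the commutant is invertible (the commutant is a field). -/
theorem stmt5 {F : Type*} [Field F] {n : ℕ} (hn : 1 ≤ n)
    (A : Matrix (Fin n) (Fin n) F) (hA : Irreducible (Matrix.charpoly A)) :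
    ({B : Matrix (Fin n) (Fin n) F | A * B = B * A} =
        {M | ∃ f : Polynomial F, f.natDegree ≤ n - 1 ∧ M = Polynomial.aeval A f}) ∧
    (∀ B : Matrix (Fin n) (Fin n) F, A * B = B * A → B ≠ 0 → IsUnit B) := by
  classical
  haveI : Nonempty (Fin n) := ⟨⟨0, hn⟩⟩
  set χ := A.charpoly with hχdef
  haveI : Fact (Irreducible χ) := ⟨hA⟩
  have hχ0 : χ ≠ 0 := hA.ne_zero
  have hdeg : χ.natDegree = n := by
    rw [hχdef, Matrix.charpoly_natDegree_eq_dim, Fintype.card_fin]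
  have hroot : Polynomial.aeval A χ = 0 := A.aeval_self_charpoly
  let K := AdjoinRoot χ
  let π : K →ₐ[F] Matrix (Fin n) (Fin n) F :=
    Ideal.Quotient.liftₐ (Ideal.span {χ}) (Polynomial.aeval A) (by
      intro a ha
      rw [Ideal.mem_span_singleton] at ha
      obtain ⟨b, rfl⟩ := ha
      rw [map_mul, hroot, zero_mul])
  have hπmk : ∀ g : Polynomial F, π (AdjoinRoot.mk χ g) = Polynomial.aeval A g := by
    intro g
    show Ideal.Quotient.liftₐ _ _ _ (Ideal.Quotient.mk _ g) = _
    rw [Ideal.Quotient.liftₐ_apply]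
    rfl
  -- every π k commutes with anything commuting with A
  have hcomm : ∀ (B : Matrix (Fin n) (Fin n) F), A * B = B * A →
      ∀ k : K, B * π k = π k * B := by
    intro B hB k
    obtain ⟨g, rfl⟩ := AdjoinRoot.mk_surjective k
    have hmem : Polynomial.aeval A g ∈ Algebra.adjoin F {A} := by
      rw [Algebra.adjoin_singleton_eq_range_aeval]; exact ⟨g, rfl⟩
    have h : Commute B (Polynomial.aeval A g) :=
      Algebra.commute_of_mem_adjoin_singleton_of_commute hmem hB.symm
    simpa [hπmk g] using h.eq
  -- the cyclic vector map
  let v : Fin n → F := 1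
  have hv : v ≠ 0 := one_ne_zero
  let Φ : K →ₗ[F] (Fin n → F) :=
    { toFun := fun k => (π k) *ᵥ v
      map_add' := fun k l => by simp [Matrix.add_mulVec]
      map_smul' := fun c k => by simp [Matrix.smul_mulVec] }
  have hΦmul : ∀ k l : K, Φ (k * l) = π k *ᵥ Φ l := by
    intro k l
    simp [Φ, map_mul, Matrix.mulVec_mulVec]
  have hΦ1 : Φ 1 = v := by simp [Φ]
  have hΦinj : Function.Injective Φ := by
    rw [injective_iff_map_eq_zero]
    intro k hk
    by_contra hk0
    have h1 : Φ (k⁻¹ * k) = π k⁻¹ *ᵥ Φ k := hΦmul _ _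
    rw [inv_mul_cancel₀ hk0, hΦ1, hk, Matrix.mulVec_zero] at h1
    exact hv h1
  haveI : Module.Finite F K := (AdjoinRoot.powerBasis hχ0).finite
  have hfr : Module.finrank F K = Module.finrank F (Fin n → F) := by
    rw [(AdjoinRoot.powerBasis hχ0).finrank, AdjoinRoot.powerBasis_dim, hdeg,
      Module.finrank_pi]
    simp
  have hΦsurj : Function.Surjective Φ :=
    (LinearMap.injective_iff_surjective_of_finrank_eq_finrank hfr).mp hΦinj
  -- main claim: every B commuting with A is π k₀ for some k₀
  have main : ∀ B : Matrix (Fin n) (Fin n) F, A * B = B * A → ∃ k : K, B = π k := by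
    intro B hB
    obtain ⟨k₀, hk₀⟩ := hΦsurj (B *ᵥ v)
    refine ⟨k₀, ?_⟩
    have hx : ∀ x, B *ᵥ x = π k₀ *ᵥ x := by
      intro x
      obtain ⟨k, rfl⟩ := hΦsurj x
      calc B *ᵥ Φ k = (B * π k) *ᵥ v := by simp [Φ, Matrix.mulVec_mulVec]
        _ = (π k * B) *ᵥ v := by rw [hcomm B hB k]
        _ = π k *ᵥ (B *ᵥ v) := by rw [Matrix.mulVec_mulVec]
        _ = π k *ᵥ Φ k₀ := by rw [hk₀]
        _ = Φ (k * k₀) := (hΦmul _ _).symm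
        _ = Φ (k₀ * k) := by rw [mul_comm]
        _ = π k₀ *ᵥ Φ k := hΦmul _ _
    exact Matrix.toLin'.injective (LinearMap.ext fun x => by
      rw [Matrix.toLin'_apply, Matrix.toLin'_apply]; exact hx x)
  constructor
  · ext M
    simp only [Set.mem_setOf_eq]
    constructor
    · intro hM
      obtain ⟨k, rfl⟩ := main M hM
      obtain ⟨g, rfl⟩ := AdjoinRoot.mk_surjective k
      refine ⟨g %ₘ χ, ?_, ?_⟩
      · have h1 : χ ≠ 1 := by
          intro h; rw [h] at hdeg; simp at hdeg; omega
        have h2 := Polynomial.natDegree_modByMonic_lt g A.charpoly_monic h1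
        rw [← hχdef] at h2
        omega
      · have hsplit := Polynomial.modByMonic_add_div g χ
        have : Polynomial.aeval A g = Polynomial.aeval A (g %ₘ χ) := by
          conv_lhs => rw [← hsplit]
          simp [hroot]
        rw [hπmk, this]
    · rintro ⟨f, -, rfl⟩
      have hmem : Polynomial.aeval A f ∈ Algebra.adjoin F {A} := by
        rw [Algebra.adjoin_singleton_eq_range_aeval]; exact ⟨f, rfl⟩
      exact Algebra.commute_of_mem_adjoin_singleton_of_commute hmem (Commute.refl A)
  · intro B hB hB0
    obtain ⟨k, rfl⟩ := main B hB
    have hk0 : k ≠ 0 := by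
      rintro rfl; simp at hB0
    exact (isUnit_iff_ne_zero.mpr hk0).map π
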